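/- Let g be a Lie triple system over a field F with char F ≠ 2, 3 and N : g → g a Nijenhuis operator. Then for all integers j, k > 0 and all x1,x2,x3 ∈ g one has N^j([x1,x2,x3]_{N^k}) + N^k([x1,x2,x3]_{N^j}) = [N^k x1,N^j x2,x3] + [N^k x1,x2,N^j x3] + [x1,N^k x2,N^j x3] + [N^j x1,N^k x2,x3] + [N^j x1,x2,N^k x3] + [x1,N^j x2,N^k x3]. -/
import Mathlib


/-- `N` is a Nijenhuis operator for the Lie triple system bracket `t`. -/
def IsNijenhuis {F : Type*} [Field F] {g : Type*} [AddCommGroup g] [Module F g]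
    (t : g →ₗ[F] g →ₗ[F] g →ₗ[F] g) (N : Module.End F g) : Prop :=
  (∀ x y z : g, t (N x) (N y) (N z) = 0) ∧
  (∀ x y z : g,
    N (N (t x y z)) =
      N (t (N x) y z) + N (t x (N y) z) + N (t x y (N z)) -
        t (N x) (N y) z - t (N x) y (N z) - t x (N y) (N z))

/-- The deformed bracket `[x,y,z]_M = [Mx,y,z]+[x,My,z]+[x,y,Mz]−M[x,y,z]`. -/
def deform {g : Type*} [AddCommGroup g] (b : g → g → g → g) (M : g → g) :
    g → g → g → g :=
  fun x y z => b (M x) y z + b x (M y) z + b x y (M z) - M (b x y z)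

namespace NijAux

variable {F : Type*} [Field F] {g : Type*} [AddCommGroup g] [Module F g]
variable (t : g →ₗ[F] g →ₗ[F] g →ₗ[F] g) (N : Module.End F g)

def S (m a b c : ℕ) (x y z : g) : g :=
  (N ^ m) (t ((N ^ a) x) ((N ^ b) y) ((N ^ c) z))

lemma pow_out (n : ℕ) (w : g) : (N ^ (n + 1)) w = (N ^ n) (N w) := by
  rw [pow_succ, Module.End.mul_apply]

lemma pow_in (n : ℕ) (w : g) : (N ^ (n + 1)) w = N ((N ^ n) w) := by
  rw [pow_succ', Module.End.mul_apply]

lemma S_shift1 (m a b c : ℕ) (x y z : g) :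
    S t N m a b c (N x) y z = S t N m (a + 1) b c x y z := by
  simp only [S, pow_out]

lemma S_shift2 (m a b c : ℕ) (x y z : g) :
    S t N m a b c x (N y) z = S t N m a (b + 1) c x y z := by
  simp only [S, pow_out]

lemma S_shift3 (m a b c : ℕ) (x y z : g) :
    S t N m a b c x y (N z) = S t N m a b (c + 1) x y z := by
  simp only [S, pow_out]

lemma S_zero (hN : IsNijenhuis t N) (m a b c : ℕ) (x y z : g) :
    S t N m (a + 1) (b + 1) (c + 1) x y z = 0 := by
  simp only [S, pow_in]
  rw [hN.1]
  exact map_zero _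

lemma S_zero' (hN : IsNijenhuis t N) (m a b c : ℕ) (x y z : g)
    (ha : a ≠ 0) (hb : b ≠ 0) (hc : c ≠ 0) : S t N m a b c x y z = 0 := by
  obtain ⟨a, rfl⟩ : ∃ a', a = a' + 1 := ⟨a - 1, by omega⟩
  obtain ⟨b, rfl⟩ : ∃ b', b = b' + 1 := ⟨b - 1, by omega⟩
  obtain ⟨c, rfl⟩ : ∃ c', c = c' + 1 := ⟨c - 1, by omega⟩
  exact S_zero t N hN m a b c x y z

lemma S_rec (hN : IsNijenhuis t N) (m a b c : ℕ) (x y z : g) :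
    S t N (m + 1 + 1) a b c x y z =
      S t N (m + 1) (a + 1) b c x y z + S t N (m + 1) a (b + 1) c x y z +
        S t N (m + 1) a b (c + 1) x y z -
        S t N m (a + 1) (b + 1) c x y z - S t N m (a + 1) b (c + 1) x y z -
        S t N m a (b + 1) (c + 1) x y z := by
  have h2 : ∀ w : g, (N ^ (m + 1 + 1)) w = (N ^ m) (N (N w)) := by
    intro w; rw [pow_out, pow_out]
  have h1 : ∀ w : g, (N ^ (m + 1)) w = (N ^ m) (N w) := fun w => pow_out N m w
  simp only [S]
  rw [h2]
  simp only [h1]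
  simp only [pow_in]
  rw [hN.2 ((N ^ a) x) ((N ^ b) y) ((N ^ c) z)]
  simp only [map_add, map_sub]

def gam (j k : ℕ) (x y z : g) : g :=
  S t N 0 j k 0 x y z + S t N 0 j 0 k x y z + S t N 0 k j 0 x y z +
    S t N 0 0 j k x y z + S t N 0 k 0 j x y z + S t N 0 0 k j x y z -
    S t N k j 0 0 x y z - S t N k 0 j 0 x y z - S t N k 0 0 j x y z -
    S t N j k 0 0 x y z - S t N j 0 k 0 x y z - S t N j 0 0 k x y z +
    S t N (j + k) 0 0 0 x y z + S t N (j + k) 0 0 0 x y z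

lemma gam_symm (j k : ℕ) (x y z : g) : gam t N j k x y z = gam t N k j x y z := by
  simp only [gam]
  rw [Nat.add_comm j k]
  abel

lemma gam_one_one (hN : IsNijenhuis t N) (x y z : g) : gam t N 1 1 x y z = 0 := by
  have c1 := S_rec t N hN 0 0 0 0 x y z
  simp only [gam]
  simp only [Nat.zero_add, Nat.reduceAdd] at c1 ⊢
  rw [c1]
  abel

lemma gam_rec2 (hN : IsNijenhuis t N) (j : ℕ) (x y z : g) :
    gam t N (j + 1) 2 x y z =
      gam t N (j + 1) 1 (N x) y z + gam t N (j + 1) 1 x (N y) z +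
        gam t N (j + 1) 1 x y (N z) := by
  have hz := S_zero' t N hN
  have a1 := S_rec t N hN (j + 1) 0 0 0 x y z
  rw [show j + 1 + 1 + 1 = j + 1 + 2 from by omega] at a1
  have a2 := S_rec t N hN 0 (j + 1) 0 0 x y z
  have a3 := S_rec t N hN 0 0 (j + 1) 0 x y z
  have a4 := S_rec t N hN 0 0 0 (j + 1) x y z
  simp only [gam, S_shift1, S_shift2, S_shift3]
  simp [hz] at a1 a2 a3 a4 ⊢
  rw [a1, a2, a3, a4]
  abel

lemma gam_rec (hN : IsNijenhuis t N) (j k : ℕ) (x y z : g) :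
    gam t N (j + 1) (k + 1 + 1 + 1) x y z =
      gam t N (j + 1) (k + 1 + 1) (N x) y z + gam t N (j + 1) (k + 1 + 1) x (N y) z +
        gam t N (j + 1) (k + 1 + 1) x y (N z) -
        gam t N (j + 1) (k + 1) (N x) (N y) z - gam t N (j + 1) (k + 1) (N x) y (N z) -
        gam t N (j + 1) (k + 1) x (N y) (N z) := by
  have hz := S_zero' t N hN
  have a1 := S_rec t N hN (j + 1 + (k + 1)) 0 0 0 x y z
  rw [show j + 1 + (k + 1) + 1 + 1 = j + 1 + (k + 1 + 1 + 1) from by omega,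
      show j + 1 + (k + 1) + 1 = j + 1 + (k + 1 + 1) from by omega] at a1
  have a2 := S_rec t N hN (k + 1) (j + 1) 0 0 x y z
  have a3 := S_rec t N hN (k + 1) 0 (j + 1) 0 x y z
  have a4 := S_rec t N hN (k + 1) 0 0 (j + 1) x y z
  simp only [gam, S_shift1, S_shift2, S_shift3]
  simp [hz] at a1 a2 a3 a4 ⊢
  rw [a1, a2, a3, a4]
  abel

lemma gam_one (hN : IsNijenhuis t N) (k : ℕ) :
    (∀ x y z : g, gam t N 1 (k + 1) x y z = 0) ∧
      (∀ x y z : g, gam t N 1 (k + 1 + 1) x y z = 0) := by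
  induction k with
  | zero =>
    constructor
    · intro x y z
      simp only [Nat.zero_add]
      exact gam_one_one t N hN x y z
    · intro x y z
      simp only [Nat.zero_add, Nat.reduceAdd]
      have h := gam_rec2 t N hN 0 x y z
      simp only [Nat.zero_add] at h
      rw [h, gam_one_one t N hN, gam_one_one t N hN, gam_one_one t N hN]
      simp
  | succ k ih =>
    refine ⟨ih.2, fun x y z => ?_⟩
    have h := gam_rec t N hN 0 k x y z
    simp only [Nat.zero_add] at h
    rw [h]
    simp only [ih.1, ih.2]
    simp

lemma gam_all (hN : IsNijenhuis t N) (j k : ℕ) (x y z : g) :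
    gam t N (j + 1) (k + 1) x y z = 0 := by
  have base1 : ∀ x y z : g, gam t N (j + 1) 1 x y z = 0 := by
    intro x y z
    rw [gam_symm]
    exact (gam_one t N hN j).1 x y z
  have main : ∀ k : ℕ, (∀ x y z : g, gam t N (j + 1) (k + 1) x y z = 0) ∧
      (∀ x y z : g, gam t N (j + 1) (k + 1 + 1) x y z = 0) := by
    intro k
    induction k with
    | zero =>
      constructor
      · intro x y z
        simp only [Nat.zero_add]
        exact base1 x y z
      · intro x y z
        simp only [Nat.zero_add, Nat.reduceAdd]
        rw [gam_rec2 t N hN j x y z, base1, base1, base1]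
        simp
    | succ k ih =>
      refine ⟨ih.2, fun x y z => ?_⟩
      rw [gam_rec t N hN j k x y z]
      simp only [ih.1, ih.2]
      simp
  exact (main k).1 x y z

end NijAux

set_option maxHeartbeats 1000000 in
theorem nijenhuis_pow_mixed_identity {F : Type*} [Field F]
    (hchar2 : (2 : F) ≠ 0) (hchar3 : (3 : F) ≠ 0)
    {g : Type*} [AddCommGroup g] [Module F g]
    (t : g →ₗ[F] g →ₗ[F] g →ₗ[F] g)
    (hskew : ∀ x y : g, t x x y = 0)
    (hjac : ∀ x y z : g, t x y z + t y z x + t z x y = 0)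
    (hfund : ∀ x y a b c : g,
      t x y (t a b c) = t (t x y a) b c + t a (t x y b) c + t a b (t x y c))
    (N : Module.End F g) (hN : IsNijenhuis t N) :
    ∀ j k : ℕ, 0 < j → 0 < k → ∀ x1 x2 x3 : g,
      (N ^ j) (deform (fun x y z => t x y z) (⇑(N ^ k)) x1 x2 x3) +
        (N ^ k) (deform (fun x y z => t x y z) (⇑(N ^ j)) x1 x2 x3) =
        t ((N ^ k) x1) ((N ^ j) x2) x3 + t ((N ^ k) x1) x2 ((N ^ j) x3) +
          t x1 ((N ^ k) x2) ((N ^ j) x3) + t ((N ^ j) x1) ((N ^ k) x2) x3 +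
          t ((N ^ j) x1) x2 ((N ^ k) x3) + t x1 ((N ^ j) x2) ((N ^ k) x3) := by
  intro j k hj hk x1 x2 x3
  obtain ⟨j', rfl⟩ : ∃ j', j = j' + 1 := ⟨j - 1, by omega⟩
  obtain ⟨k', rfl⟩ : ∃ k', k = k' + 1 := ⟨k - 1, by omega⟩
  have h := NijAux.gam_all t N hN j' k' x1 x2 x3
  simp only [NijAux.gam, NijAux.S, pow_zero, Module.End.one_apply] at h
  have hc1 : ∀ w : g, (N ^ (j' + 1)) ((N ^ (k' + 1)) w) = (N ^ (j' + 1 + (k' + 1))) w := by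
    intro w; rw [← Module.End.mul_apply, ← pow_add]
  have hc2 : ∀ w : g, (N ^ (k' + 1)) ((N ^ (j' + 1)) w) = (N ^ (j' + 1 + (k' + 1))) w := by
    intro w
    rw [← Module.End.mul_apply, ← pow_add, show k' + 1 + (j' + 1) = j' + 1 + (k' + 1) from by omega]
  simp only [deform, map_add, map_sub, hc1, hc2]
  have h2 : -(0:g) = _ := congrArg Neg.neg h.symm
  rw [← sub_eq_zero, show (0:g) = -0 from (neg_zero).symm, h2]
  abel
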